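/- Let a, b ∈ ℂ with |a - b| < δ, and let K ⊂ ℂ be compact with dist(a, K) ≥ δ and dist(b, K) ≥ δ. Then on K, the function z ↦ 1/(a - z) is a uniform limit of polynomials in the function z ↦ 1/(b - z): for every ε > 0 there is a polynomial q such that |1/(a-z) - q(1/(b-z))| < ε for all z ∈ K. -/

import Mathlib

/-- Pole pushing: if `|a - b| < δ` and both `a, b` have distance at least `δ` from the
compact set `K`, then `z ↦ 1/(a - z)` is a uniform limit on `K` of polynomials in
`z ↦ 1/(b - z)`. -/
theorem pole_pushing (a b : ℂ) (δ : ℝ) (hδ : 0 < δ) (hab : ‖a - b‖ < δ)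
    (K : Set ℂ) (hK : IsCompact K)
    (ha : ∀ z ∈ K, δ ≤ dist a z) (hb : ∀ z ∈ K, δ ≤ dist b z) :
    ∀ ε > 0, ∃ q : Polynomial ℂ, ∀ z ∈ K,
      ‖1 / (a - z) - q.eval (1 / (b - z))‖ < ε := by
  intro ε hε
  set r : ℝ := ‖a - b‖ / δ with hr
  have hr0 : 0 ≤ r := div_nonneg (norm_nonneg _) hδ.le
  have hr1 : r < 1 := (div_lt_one hδ).mpr hab
  -- choose m with r^m / δ < ε
  have htend : Filter.Tendsto (fun m : ℕ => r ^ m) Filter.atTop (nhds 0) :=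
    tendsto_pow_atTop_nhds_zero_of_lt_one hr0 hr1
  have : ∀ᶠ m in Filter.atTop, r ^ m < ε * δ := by
    have := htend.eventually (gt_mem_nhds (mul_pos hε hδ))
    exact this
  obtain ⟨m, hm⟩ := this.exists
  refine ⟨∑ k ∈ Finset.range m, Polynomial.C ((b - a) ^ k) * Polynomial.X ^ (k + 1), ?_⟩
  intro z hz
  have haz : a - z ≠ 0 := by
    intro h
    have := ha z hz
    rw [dist_eq_norm] at this
    simp [h] at this; linarith
  have hbz : b - z ≠ 0 := by
    intro h
    have := hb z hz
    rw [dist_eq_norm] at this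
    simp [h] at this; linarith
  have hbzδ : δ ≤ ‖b - z‖ := by
    have := hb z hz; rwa [Complex.dist_eq] at this
  have hazδ : δ ≤ ‖a - z‖ := by
    have := ha z hz; rwa [Complex.dist_eq] at this
  set t : ℂ := (b - a) / (b - z) with ht
  have h2 : t * (b - z) = b - a := div_mul_cancel₀ _ hbz
  have ht1 : t ≠ 1 := by
    intro h
    rw [h, one_mul] at h2
    exact haz (by linear_combination h2)
  -- evaluate the polynomial
  have heval : (∑ k ∈ Finset.range m, Polynomial.C ((b - a) ^ k) * Polynomial.X ^ (k + 1)).eval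
      (1 / (b - z)) = (∑ k ∈ Finset.range m, t ^ k) / (b - z) := by
    rw [Polynomial.eval_finset_sum, Finset.sum_div]
    refine Finset.sum_congr rfl fun k _ => ?_
    simp only [Polynomial.eval_mul, Polynomial.eval_C, Polynomial.eval_pow, Polynomial.eval_X, ht]
    rw [div_pow, div_pow, one_pow, div_div, ← pow_succ, mul_one_div]
  have hgeom : ∑ k ∈ Finset.range m, t ^ k = (t ^ m - 1) / (t - 1) := geom_sum_eq ht1 m
  have key : 1 / (a - z) - (∑ k ∈ Finset.range m, t ^ k) / (b - z) = t ^ m / (a - z) := by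
    rw [hgeom, div_div]
    have h3 : (t - 1) * (b - z) = -(a - z) := by rw [sub_mul, h2]; ring
    rw [h3, div_neg, sub_neg_eq_add, ← add_div]
    congr 1
    ring
  rw [heval, key]
  have habs : ‖t‖ ≤ r := by
    rw [ht, norm_div, hr, show ‖b - a‖ = ‖a - b‖ by
      rw [← norm_neg, neg_sub]]
    gcongr
  calc ‖t ^ m / (a - z)‖ = ‖t‖ ^ m / ‖a - z‖ := by
        rw [norm_div, norm_pow]
    _ ≤ r ^ m / δ := by
        apply div_le_div₀ (pow_nonneg hr0 m) (pow_le_pow_left₀ (norm_nonneg _) habs m) hδ hazδ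
    _ < ε := by rw [div_lt_iff₀ hδ]; linarith
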